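/- For K = 3 and any I ≥ 6, the number of identity states equals 21; that is, the number of orbits of pairs of count vectors of size 3 on Fin I under the S₂ × S_I action is 21. -/

import Mathlib

open Finset

/-- The orbit of an ordered pair of count vectors `(g₁, g₂)` under the action of
`S₂ × S_I`: the `S₂` factor swaps the two count vectors, and a permutation
`σ ∈ S_I` relabels the index set of both count vectors by precomposition
with `σ⁻¹`. -/
def pairOrbit (I : ℕ) (x : (Fin I → ℕ) × (Fin I → ℕ)) :
    Set ((Fin I → ℕ) × (Fin I → ℕ)) :=
  {y | ∃ σ : Equiv.Perm (Fin I),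
    y = (x.1 ∘ ⇑σ.symm, x.2 ∘ ⇑σ.symm) ∨ y = (x.2 ∘ ⇑σ.symm, x.1 ∘ ⇑σ.symm)}

/-- The set of identity states `C^K_I`: the orbits of pairs of count vectors of
size `K` on `Fin I` under the `S₂ × S_I` action. -/
def IdentityStates (K I : ℕ) :=
  {S : Set ((Fin I → ℕ) × (Fin I → ℕ)) //
    ∃ x : (Fin I → ℕ) × (Fin I → ℕ),
      (∑ i, x.1 i = K) ∧ (∑ i, x.2 i = K) ∧ S = pairOrbit I x}

variable {I : ℕ}

def cnt (x : (Fin I → ℕ) × (Fin I → ℕ)) (p : ℕ × ℕ) : ℕ :=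
  Fintype.card {i : Fin I // (x.1 i, x.2 i) = p}

lemma cnt_comp (x : (Fin I → ℕ) × (Fin I → ℕ)) (τ : Equiv.Perm (Fin I)) (p : ℕ × ℕ) :
    cnt (x.1 ∘ ⇑τ, x.2 ∘ ⇑τ) p = cnt x p :=
  Fintype.card_congr (Equiv.subtypeEquiv τ (fun a => Iff.rfl))

lemma exists_perm_of_cnt_eq {x y : (Fin I → ℕ) × (Fin I → ℕ)}
    (h : ∀ p, cnt y p = cnt x p) :
    ∃ σ : Equiv.Perm (Fin I), y = (x.1 ∘ ⇑σ.symm, x.2 ∘ ⇑σ.symm) := by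
  have e : ∀ p : ℕ × ℕ, {i : Fin I // (y.1 i, y.2 i) = p} ≃ {i : Fin I // (x.1 i, x.2 i) = p} :=
    fun p => Fintype.equivOfCardEq (h p)
  let σ := Equiv.ofFiberEquiv e
  have hσ : ∀ i, (x.1 (σ i), x.2 (σ i)) = (y.1 i, y.2 i) := fun i => Equiv.ofFiberEquiv_map e i
  refine ⟨σ.symm, ?_⟩
  have h1 : y.1 = x.1 ∘ ⇑σ := funext fun i => (congrArg Prod.fst (hσ i)).symm
  have h2 : y.2 = x.2 ∘ ⇑σ := funext fun i => (congrArg Prod.snd (hσ i)).symm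
  simp only [Equiv.symm_symm]
  exact Prod.ext h1 h2

lemma cnt_swap (x : (Fin I → ℕ) × (Fin I → ℕ)) (p : ℕ × ℕ) :
    cnt (x.2, x.1) p = cnt x p.swap := by
  unfold cnt
  exact Fintype.card_congr (Equiv.subtypeEquivRight (fun i => by
    simp [Prod.ext_iff, and_comm]))

/-- The cnt-level relation characterizing orbit membership. -/
def CntRel (x y : (Fin I → ℕ) × (Fin I → ℕ)) : Prop :=
  (∀ p, cnt y p = cnt x p) ∨ (∀ p, cnt y p = cnt (x.2, x.1) p)

lemma mem_pairOrbit_iff {x y : (Fin I → ℕ) × (Fin I → ℕ)} :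
    y ∈ pairOrbit I x ↔ CntRel x y := by
  constructor
  · rintro ⟨σ, h | h⟩
    · left; intro p; rw [h]
      exact cnt_comp x σ.symm p
    · right; intro p; rw [h]
      exact cnt_comp (x.2, x.1) σ.symm p
  · rintro (h | h)
    · obtain ⟨σ, hσ⟩ := exists_perm_of_cnt_eq h
      exact ⟨σ, Or.inl hσ⟩
    · obtain ⟨σ, hσ⟩ := exists_perm_of_cnt_eq h
      exact ⟨σ, Or.inr hσ⟩

lemma pairOrbit_eq_of_cntRel {x y : (Fin I → ℕ) × (Fin I → ℕ)}
    (h : CntRel x y) : pairOrbit I x = pairOrbit I y := by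
  have swsw : ∀ z : (Fin I → ℕ) × (Fin I → ℕ), ∀ p, cnt ((z.2, z.1).2, (z.2, z.1).1) p = cnt z p := by
    intro z p; rfl
  ext z
  rw [mem_pairOrbit_iff, mem_pairOrbit_iff]
  unfold CntRel at *
  rcases h with h | h
  · constructor
    · rintro (h' | h')
      · left; intro p; rw [h' p, ← h p]
      · right; intro p; rw [h' p, cnt_swap, cnt_swap, h p.swap]
    · rintro (h' | h')
      · left; intro p; rw [h' p, h p]
      · right; intro p; rw [h' p, cnt_swap, cnt_swap, h p.swap]
  · constructor
    · rintro (h' | h')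
      · right; intro p; rw [h' p, cnt_swap, h p.swap, cnt_swap, Prod.swap_swap]
      · left; intro p; rw [h' p, cnt_swap, h p, cnt_swap]
    · rintro (h' | h')
      · right; intro p; rw [h' p, h p]
      · left; intro p; rw [h' p, cnt_swap, h p.swap, cnt_swap, Prod.swap_swap]

def Tlist : List (ℕ × ℕ) :=
  [(0,1),(0,2),(0,3),(1,0),(1,1),(1,2),(1,3),(2,0),(2,1),(2,2),(2,3),(3,0),(3,1),(3,2),(3,3)]

def rcnt (x : (Fin I → ℕ) × (Fin I → ℕ)) (p : ℕ × ℕ) : ℕ :=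
  if p = (0,0) then 0 else cnt x p

def eList (x : (Fin I → ℕ) × (Fin I → ℕ)) : List ℕ := Tlist.map (rcnt x)

def sw (l : List ℕ) : List ℕ :=
  [l.getD 3 0, l.getD 7 0, l.getD 11 0, l.getD 0 0, l.getD 4 0, l.getD 8 0, l.getD 12 0,
   l.getD 1 0, l.getD 5 0, l.getD 9 0, l.getD 13 0, l.getD 2 0, l.getD 6 0, l.getD 10 0,
   l.getD 14 0]

lemma rcnt_swap (x : (Fin I → ℕ) × (Fin I → ℕ)) (p : ℕ × ℕ) :
    rcnt (x.2, x.1) p = rcnt x p.swap := by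
  obtain ⟨a, b⟩ := p
  simp only [rcnt, cnt_swap, Prod.swap_prod_mk, Prod.mk.injEq]
  by_cases h : a = 0 <;> by_cases h' : b = 0 <;> simp [h, h']

lemma sw_eList (x : (Fin I → ℕ) × (Fin I → ℕ)) : sw (eList x) = eList (x.2, x.1) := by
  simp [sw, eList, Tlist, rcnt_swap]

lemma sw_sw_eList (x : (Fin I → ℕ) × (Fin I → ℕ)) : sw (sw (eList x)) = eList x := rfl

def PInv (x : (Fin I → ℕ) × (Fin I → ℕ)) : Sym2 (List ℕ) := s(eList x, sw (eList x))

lemma entry_le {x : (Fin I → ℕ) × (Fin I → ℕ)} (h1 : ∑ i, x.1 i = 3) (i : Fin I) :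
    x.1 i ≤ 3 := h1 ▸ Finset.single_le_sum (fun j _ => Nat.zero_le _) (mem_univ i)

def TF : Finset (ℕ × ℕ) := range 4 ×ˢ range 4

lemma cnt_filter (x : (Fin I → ℕ) × (Fin I → ℕ)) (p : ℕ × ℕ) :
    cnt x p = (univ.filter (fun i => (x.1 i, x.2 i) = p)).card :=
  Fintype.card_subtype _

lemma sum_cnt {x : (Fin I → ℕ) × (Fin I → ℕ)} (h1 : ∑ i, x.1 i = 3) (h2 : ∑ i, x.2 i = 3) :
    ∑ p ∈ TF, cnt x p = I := by
  have := Finset.card_eq_sum_card_fiberwise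
    (f := fun i : Fin I => (x.1 i, x.2 i)) (s := univ) (t := TF) (fun i _ => by
      show (x.1 i, x.2 i) ∈ range 4 ×ˢ range 4
      simp only [TF, Finset.mem_product, Finset.mem_range]
      exact ⟨Nat.lt_succ_of_le (entry_le h1 i), Nat.lt_succ_of_le (entry_le (x := (x.2, x.1)) h2 i)⟩)
  simp only [Finset.card_univ, Fintype.card_fin] at this
  simp only [cnt_filter]
  exact this.symm

lemma maps_to_TF {x : (Fin I → ℕ) × (Fin I → ℕ)} (h1 : ∑ i, x.1 i = 3)
    (h2 : ∑ i, x.2 i = 3) : ∀ i : Fin I, (x.1 i, x.2 i) ∈ TF := fun i => by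
  simp only [TF, Finset.mem_product, Finset.mem_range]
  exact ⟨Nat.lt_succ_of_le (entry_le h1 i), Nat.lt_succ_of_le (entry_le (x := (x.2, x.1)) h2 i)⟩

lemma sum_mul_cnt {x : (Fin I → ℕ) × (Fin I → ℕ)} (h1 : ∑ i, x.1 i = 3) (h2 : ∑ i, x.2 i = 3) :
    ∑ p ∈ TF, p.1 * cnt x p = 3 ∧ ∑ p ∈ TF, p.2 * cnt x p = 3 := by
  have key : ∀ (g : ℕ × ℕ → ℕ), ∑ p ∈ TF, g p * cnt x p
      = ∑ i : Fin I, g (x.1 i, x.2 i) := by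
    intro g
    rw [← Finset.sum_fiberwise_of_maps_to (g := fun i : Fin I => (x.1 i, x.2 i))
      (fun i _ => maps_to_TF h1 h2 i) (fun i => g (x.1 i, x.2 i))]
    refine Finset.sum_congr rfl fun p _ => ?_
    rw [cnt_filter]
    symm
    calc ∑ i ∈ univ.filter (fun i => (x.1 i, x.2 i) = p), g (x.1 i, x.2 i)
        = ∑ _i ∈ univ.filter (fun i => (x.1 i, x.2 i) = p), g p :=
          Finset.sum_congr rfl (fun i hi => by rw [(Finset.mem_filter.1 hi).2])
      _ = (univ.filter (fun i => (x.1 i, x.2 i) = p)).card * g p := by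
          rw [Finset.sum_const, smul_eq_mul]
      _ = g p * (univ.filter (fun i => (x.1 i, x.2 i) = p)).card := mul_comm _ _
  constructor
  · rw [key (fun p => p.1)]; exact h1
  · rw [key (fun p => p.2)]; exact h2

lemma TF_expand (f : ℕ × ℕ → ℕ) : ∑ p ∈ TF, f p =
    f (0,0) + f (0,1) + f (0,2) + f (0,3) + (f (1,0) + f (1,1) + f (1,2) + f (1,3))
    + (f (2,0) + f (2,1) + f (2,2) + f (2,3)) + (f (3,0) + f (3,1) + f (3,2) + f (3,3)) := by
  rw [TF, Finset.sum_product]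
  simp [Finset.sum_range_succ]

def L31 : List (List ℕ) := [
  [0, 0, 0, 0, 0, 0, 0, 0, 0, 0, 0, 0, 0, 0, 1],
  [0, 0, 0, 0, 0, 0, 1, 1, 0, 0, 0, 0, 0, 0, 0],
  [0, 0, 0, 0, 0, 1, 0, 0, 1, 0, 0, 0, 0, 0, 0],
  [0, 0, 0, 0, 1, 0, 0, 0, 0, 1, 0, 0, 0, 0, 0],
  [0, 0, 0, 0, 3, 0, 0, 0, 0, 0, 0, 0, 0, 0, 0],
  [0, 0, 0, 1, 0, 0, 0, 0, 0, 0, 1, 0, 0, 0, 0],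
  [0, 0, 0, 1, 1, 1, 0, 0, 0, 0, 0, 0, 0, 0, 0],
  [0, 0, 0, 2, 0, 0, 1, 0, 0, 0, 0, 0, 0, 0, 0],
  [0, 0, 1, 0, 0, 0, 0, 0, 0, 0, 0, 1, 0, 0, 0],
  [0, 0, 1, 1, 0, 0, 0, 1, 0, 0, 0, 0, 0, 0, 0],
  [0, 0, 1, 3, 0, 0, 0, 0, 0, 0, 0, 0, 0, 0, 0],
  [0, 1, 0, 0, 0, 0, 0, 0, 0, 0, 0, 0, 1, 0, 0],
  [0, 1, 0, 0, 1, 0, 0, 1, 0, 0, 0, 0, 0, 0, 0],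
  [0, 1, 0, 1, 0, 0, 0, 0, 1, 0, 0, 0, 0, 0, 0],
  [0, 1, 0, 2, 1, 0, 0, 0, 0, 0, 0, 0, 0, 0, 0],
  [1, 0, 0, 0, 0, 0, 0, 0, 0, 0, 0, 0, 0, 1, 0],
  [1, 0, 0, 0, 0, 1, 0, 1, 0, 0, 0, 0, 0, 0, 0],
  [1, 0, 0, 0, 1, 0, 0, 0, 1, 0, 0, 0, 0, 0, 0],
  [1, 0, 0, 1, 0, 0, 0, 0, 0, 1, 0, 0, 0, 0, 0],
  [1, 0, 0, 1, 2, 0, 0, 0, 0, 0, 0, 0, 0, 0, 0],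
  [1, 0, 0, 2, 0, 1, 0, 0, 0, 0, 0, 0, 0, 0, 0],
  [1, 1, 0, 0, 0, 0, 0, 0, 0, 0, 0, 1, 0, 0, 0],
  [1, 1, 0, 1, 0, 0, 0, 1, 0, 0, 0, 0, 0, 0, 0],
  [1, 1, 0, 3, 0, 0, 0, 0, 0, 0, 0, 0, 0, 0, 0],
  [2, 0, 0, 0, 0, 0, 0, 0, 0, 0, 0, 0, 1, 0, 0],
  [2, 0, 0, 0, 1, 0, 0, 1, 0, 0, 0, 0, 0, 0, 0],
  [2, 0, 0, 1, 0, 0, 0, 0, 1, 0, 0, 0, 0, 0, 0],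
  [2, 0, 0, 2, 1, 0, 0, 0, 0, 0, 0, 0, 0, 0, 0],
  [3, 0, 0, 0, 0, 0, 0, 0, 0, 0, 0, 1, 0, 0, 0],
  [3, 0, 0, 1, 0, 0, 0, 1, 0, 0, 0, 0, 0, 0, 0],
  [3, 0, 0, 3, 0, 0, 0, 0, 0, 0, 0, 0, 0, 0, 0]]

set_option maxHeartbeats 2000000 in
lemma classify {x : (Fin I → ℕ) × (Fin I → ℕ)} (h1 : ∑ i, x.1 i = 3) (h2 : ∑ i, x.2 i = 3) :
    eList x ∈ L31 := by
  obtain ⟨hs1, hs2⟩ := sum_mul_cnt h1 h2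
  rw [TF_expand] at hs1 hs2
  norm_num at hs1 hs2
  simp only [eList, Tlist, L31, List.map, List.mem_cons, List.cons.injEq, List.not_mem_nil,
    or_false, rcnt, Prod.mk.injEq, if_false, and_true]
  norm_num
  generalize cnt x (0,1) = n01 at *
  generalize cnt x (0,2) = n02 at *
  generalize cnt x (0,3) = n03 at *
  generalize cnt x (1,0) = n10 at *
  generalize cnt x 1 = n11 at *
  generalize cnt x (1,2) = n12 at *
  generalize cnt x (1,3) = n13 at *
  generalize cnt x (2,0) = n20 at *
  generalize cnt x (2,1) = n21 at *
  generalize cnt x (2,2) = n22 at *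
  generalize cnt x (2,3) = n23 at *
  generalize cnt x (3,0) = n30 at *
  generalize cnt x (3,1) = n31 at *
  generalize cnt x (3,2) = n32 at *
  generalize cnt x (3,3) = n33 at *
  rcases (show n33 = 0 ∨ n33 = 1 by omega) with rfl | rfl
  · rcases (show n32 = 0 ∨ n32 = 1 by omega) with rfl | rfl
    · rcases (show n31 = 0 ∨ n31 = 1 by omega) with rfl | rfl
      · rcases (show n30 = 0 ∨ n30 = 1 by omega) with rfl | rfl
        · rcases (show n23 = 0 ∨ n23 = 1 by omega) with rfl | rfl
          · rcases (show n22 = 0 ∨ n22 = 1 by omega) with rfl | rfl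
            · rcases (show n21 = 0 ∨ n21 = 1 by omega) with rfl | rfl
              · rcases (show n20 = 0 ∨ n20 = 1 by omega) with rfl | rfl
                · rcases (show n13 = 0 ∨ n13 = 1 by omega) with rfl | rfl
                  · rcases (show n12 = 0 ∨ n12 = 1 by omega) with rfl | rfl
                    · rcases (show n11 = 0 ∨ n11 = 1 ∨ n11 = 2 ∨ n11 = 3 by omega) with rfl | rfl | rfl | rfl
                      · obtain rfl : n10 = 3 := by omega
                        rcases (show n03 = 0 ∨ n03 = 1 by omega) with rfl | rfl
                        · rcases (show n02 = 0 ∨ n02 = 1 by omega) with rfl | rfl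
                          · obtain rfl : n01 = 3 := by omega
                            exact Or.inr (Or.inr (Or.inr (Or.inr (Or.inr (Or.inr (Or.inr (Or.inr (Or.inr (Or.inr (Or.inr (Or.inr (Or.inr (Or.inr (Or.inr (Or.inr (Or.inr (Or.inr (Or.inr (Or.inr (Or.inr (Or.inr (Or.inr (Or.inr (Or.inr (Or.inr (Or.inr (Or.inr (Or.inr (Or.inr (⟨rfl, rfl, rfl, rfl, rfl, rfl, rfl, rfl, rfl, rfl, rfl, rfl, rfl, rfl, rfl⟩))))))))))))))))))))))))))))))
                          · obtain rfl : n01 = 1 := by omega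
                            exact Or.inr (Or.inr (Or.inr (Or.inr (Or.inr (Or.inr (Or.inr (Or.inr (Or.inr (Or.inr (Or.inr (Or.inr (Or.inr (Or.inr (Or.inr (Or.inr (Or.inr (Or.inr (Or.inr (Or.inr (Or.inr (Or.inr (Or.inr (Or.inl ⟨rfl, rfl, rfl, rfl, rfl, rfl, rfl, rfl, rfl, rfl, rfl, rfl, rfl, rfl, rfl⟩)))))))))))))))))))))))
                        · obtain rfl : n02 = 0 := by omega
                          obtain rfl : n01 = 0 := by omega
                          exact Or.inr (Or.inr (Or.inr (Or.inr (Or.inr (Or.inr (Or.inr (Or.inr (Or.inr (Or.inr (Or.inl ⟨rfl, rfl, rfl, rfl, rfl, rfl, rfl, rfl, rfl, rfl, rfl, rfl, rfl, rfl, rfl⟩))))))))))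
                      · obtain rfl : n10 = 2 := by omega
                        obtain rfl : n03 = 0 := by omega
                        rcases (show n02 = 0 ∨ n02 = 1 by omega) with rfl | rfl
                        · obtain rfl : n01 = 2 := by omega
                          exact Or.inr (Or.inr (Or.inr (Or.inr (Or.inr (Or.inr (Or.inr (Or.inr (Or.inr (Or.inr (Or.inr (Or.inr (Or.inr (Or.inr (Or.inr (Or.inr (Or.inr (Or.inr (Or.inr (Or.inr (Or.inr (Or.inr (Or.inr (Or.inr (Or.inr (Or.inr (Or.inr (Or.inl ⟨rfl, rfl, rfl, rfl, rfl, rfl, rfl, rfl, rfl, rfl, rfl, rfl, rfl, rfl, rfl⟩)))))))))))))))))))))))))))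
                        · obtain rfl : n01 = 0 := by omega
                          exact Or.inr (Or.inr (Or.inr (Or.inr (Or.inr (Or.inr (Or.inr (Or.inr (Or.inr (Or.inr (Or.inr (Or.inr (Or.inr (Or.inr (Or.inl ⟨rfl, rfl, rfl, rfl, rfl, rfl, rfl, rfl, rfl, rfl, rfl, rfl, rfl, rfl, rfl⟩))))))))))))))
                      · obtain rfl : n10 = 1 := by omega
                        obtain rfl : n03 = 0 := by omega
                        obtain rfl : n02 = 0 := by omega
                        obtain rfl : n01 = 1 := by omega
                        exact Or.inr (Or.inr (Or.inr (Or.inr (Or.inr (Or.inr (Or.inr (Or.inr (Or.inr (Or.inr (Or.inr (Or.inr (Or.inr (Or.inr (Or.inr (Or.inr (Or.inr (Or.inr (Or.inr (Or.inl ⟨rfl, rfl, rfl, rfl, rfl, rfl, rfl, rfl, rfl, rfl, rfl, rfl, rfl, rfl, rfl⟩)))))))))))))))))))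
                      · obtain rfl : n10 = 0 := by omega
                        obtain rfl : n03 = 0 := by omega
                        obtain rfl : n02 = 0 := by omega
                        obtain rfl : n01 = 0 := by omega
                        exact Or.inr (Or.inr (Or.inr (Or.inr (Or.inl ⟨rfl, rfl, rfl, rfl, rfl, rfl, rfl, rfl, rfl, rfl, rfl, rfl, rfl, rfl, rfl⟩))))
                    · rcases (show n11 = 0 ∨ n11 = 1 by omega) with rfl | rfl
                      · obtain rfl : n10 = 2 := by omega
                        obtain rfl : n03 = 0 := by omega
                        obtain rfl : n02 = 0 := by omega
                        obtain rfl : n01 = 1 := by omega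
                        exact Or.inr (Or.inr (Or.inr (Or.inr (Or.inr (Or.inr (Or.inr (Or.inr (Or.inr (Or.inr (Or.inr (Or.inr (Or.inr (Or.inr (Or.inr (Or.inr (Or.inr (Or.inr (Or.inr (Or.inr (Or.inl ⟨rfl, rfl, rfl, rfl, rfl, rfl, rfl, rfl, rfl, rfl, rfl, rfl, rfl, rfl, rfl⟩))))))))))))))))))))
                      · obtain rfl : n10 = 1 := by omega
                        obtain rfl : n03 = 0 := by omega
                        obtain rfl : n02 = 0 := by omega
                        obtain rfl : n01 = 0 := by omega
                        exact Or.inr (Or.inr (Or.inr (Or.inr (Or.inr (Or.inr (Or.inl ⟨rfl, rfl, rfl, rfl, rfl, rfl, rfl, rfl, rfl, rfl, rfl, rfl, rfl, rfl, rfl⟩))))))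
                  · obtain rfl : n12 = 0 := by omega
                    obtain rfl : n11 = 0 := by omega
                    obtain rfl : n10 = 2 := by omega
                    obtain rfl : n03 = 0 := by omega
                    obtain rfl : n02 = 0 := by omega
                    obtain rfl : n01 = 0 := by omega
                    exact Or.inr (Or.inr (Or.inr (Or.inr (Or.inr (Or.inr (Or.inr (Or.inl ⟨rfl, rfl, rfl, rfl, rfl, rfl, rfl, rfl, rfl, rfl, rfl, rfl, rfl, rfl, rfl⟩)))))))
                · rcases (show n13 = 0 ∨ n13 = 1 by omega) with rfl | rfl
                  · rcases (show n12 = 0 ∨ n12 = 1 by omega) with rfl | rfl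
                    · rcases (show n11 = 0 ∨ n11 = 1 by omega) with rfl | rfl
                      · obtain rfl : n10 = 1 := by omega
                        rcases (show n03 = 0 ∨ n03 = 1 by omega) with rfl | rfl
                        · rcases (show n02 = 0 ∨ n02 = 1 by omega) with rfl | rfl
                          · obtain rfl : n01 = 3 := by omega
                            exact Or.inr (Or.inr (Or.inr (Or.inr (Or.inr (Or.inr (Or.inr (Or.inr (Or.inr (Or.inr (Or.inr (Or.inr (Or.inr (Or.inr (Or.inr (Or.inr (Or.inr (Or.inr (Or.inr (Or.inr (Or.inr (Or.inr (Or.inr (Or.inr (Or.inr (Or.inr (Or.inr (Or.inr (Or.inr (Or.inl ⟨rfl, rfl, rfl, rfl, rfl, rfl, rfl, rfl, rfl, rfl, rfl, rfl, rfl, rfl, rfl⟩)))))))))))))))))))))))))))))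
                          · obtain rfl : n01 = 1 := by omega
                            exact Or.inr (Or.inr (Or.inr (Or.inr (Or.inr (Or.inr (Or.inr (Or.inr (Or.inr (Or.inr (Or.inr (Or.inr (Or.inr (Or.inr (Or.inr (Or.inr (Or.inr (Or.inr (Or.inr (Or.inr (Or.inr (Or.inr (Or.inl ⟨rfl, rfl, rfl, rfl, rfl, rfl, rfl, rfl, rfl, rfl, rfl, rfl, rfl, rfl, rfl⟩))))))))))))))))))))))
                        · obtain rfl : n02 = 0 := by omega
                          obtain rfl : n01 = 0 := by omega
                          exact Or.inr (Or.inr (Or.inr (Or.inr (Or.inr (Or.inr (Or.inr (Or.inr (Or.inr (Or.inl ⟨rfl, rfl, rfl, rfl, rfl, rfl, rfl, rfl, rfl, rfl, rfl, rfl, rfl, rfl, rfl⟩)))))))))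
                      · obtain rfl : n10 = 0 := by omega
                        obtain rfl : n03 = 0 := by omega
                        rcases (show n02 = 0 ∨ n02 = 1 by omega) with rfl | rfl
                        · obtain rfl : n01 = 2 := by omega
                          exact Or.inr (Or.inr (Or.inr (Or.inr (Or.inr (Or.inr (Or.inr (Or.inr (Or.inr (Or.inr (Or.inr (Or.inr (Or.inr (Or.inr (Or.inr (Or.inr (Or.inr (Or.inr (Or.inr (Or.inr (Or.inr (Or.inr (Or.inr (Or.inr (Or.inr (Or.inl ⟨rfl, rfl, rfl, rfl, rfl, rfl, rfl, rfl, rfl, rfl, rfl, rfl, rfl, rfl, rfl⟩)))))))))))))))))))))))))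
                        · obtain rfl : n01 = 0 := by omega
                          exact Or.inr (Or.inr (Or.inr (Or.inr (Or.inr (Or.inr (Or.inr (Or.inr (Or.inr (Or.inr (Or.inr (Or.inr (Or.inl ⟨rfl, rfl, rfl, rfl, rfl, rfl, rfl, rfl, rfl, rfl, rfl, rfl, rfl, rfl, rfl⟩))))))))))))
                    · obtain rfl : n11 = 0 := by omega
                      obtain rfl : n10 = 0 := by omega
                      obtain rfl : n03 = 0 := by omega
                      obtain rfl : n02 = 0 := by omega
                      obtain rfl : n01 = 1 := by omega
                      exact Or.inr (Or.inr (Or.inr (Or.inr (Or.inr (Or.inr (Or.inr (Or.inr (Or.inr (Or.inr (Or.inr (Or.inr (Or.inr (Or.inr (Or.inr (Or.inr (Or.inl ⟨rfl, rfl, rfl, rfl, rfl, rfl, rfl, rfl, rfl, rfl, rfl, rfl, rfl, rfl, rfl⟩))))))))))))))))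
                  · obtain rfl : n12 = 0 := by omega
                    obtain rfl : n11 = 0 := by omega
                    obtain rfl : n10 = 0 := by omega
                    obtain rfl : n03 = 0 := by omega
                    obtain rfl : n02 = 0 := by omega
                    obtain rfl : n01 = 0 := by omega
                    exact Or.inr (Or.inl ⟨rfl, rfl, rfl, rfl, rfl, rfl, rfl, rfl, rfl, rfl, rfl, rfl, rfl, rfl, rfl⟩)
              · obtain rfl : n20 = 0 := by omega
                obtain rfl : n13 = 0 := by omega
                rcases (show n12 = 0 ∨ n12 = 1 by omega) with rfl | rfl
                · rcases (show n11 = 0 ∨ n11 = 1 by omega) with rfl | rfl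
                  · obtain rfl : n10 = 1 := by omega
                    obtain rfl : n03 = 0 := by omega
                    rcases (show n02 = 0 ∨ n02 = 1 by omega) with rfl | rfl
                    · obtain rfl : n01 = 2 := by omega
                      exact Or.inr (Or.inr (Or.inr (Or.inr (Or.inr (Or.inr (Or.inr (Or.inr (Or.inr (Or.inr (Or.inr (Or.inr (Or.inr (Or.inr (Or.inr (Or.inr (Or.inr (Or.inr (Or.inr (Or.inr (Or.inr (Or.inr (Or.inr (Or.inr (Or.inr (Or.inr (Or.inl ⟨rfl, rfl, rfl, rfl, rfl, rfl, rfl, rfl, rfl, rfl, rfl, rfl, rfl, rfl, rfl⟩))))))))))))))))))))))))))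
                    · obtain rfl : n01 = 0 := by omega
                      exact Or.inr (Or.inr (Or.inr (Or.inr (Or.inr (Or.inr (Or.inr (Or.inr (Or.inr (Or.inr (Or.inr (Or.inr (Or.inr (Or.inl ⟨rfl, rfl, rfl, rfl, rfl, rfl, rfl, rfl, rfl, rfl, rfl, rfl, rfl, rfl, rfl⟩)))))))))))))
                  · obtain rfl : n10 = 0 := by omega
                    obtain rfl : n03 = 0 := by omega
                    obtain rfl : n02 = 0 := by omega
                    obtain rfl : n01 = 1 := by omega
                    exact Or.inr (Or.inr (Or.inr (Or.inr (Or.inr (Or.inr (Or.inr (Or.inr (Or.inr (Or.inr (Or.inr (Or.inr (Or.inr (Or.inr (Or.inr (Or.inr (Or.inr (Or.inl ⟨rfl, rfl, rfl, rfl, rfl, rfl, rfl, rfl, rfl, rfl, rfl, rfl, rfl, rfl, rfl⟩)))))))))))))))))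
                · obtain rfl : n11 = 0 := by omega
                  obtain rfl : n10 = 0 := by omega
                  obtain rfl : n03 = 0 := by omega
                  obtain rfl : n02 = 0 := by omega
                  obtain rfl : n01 = 0 := by omega
                  exact Or.inr (Or.inr (Or.inl ⟨rfl, rfl, rfl, rfl, rfl, rfl, rfl, rfl, rfl, rfl, rfl, rfl, rfl, rfl, rfl⟩))
            · obtain rfl : n21 = 0 := by omega
              obtain rfl : n20 = 0 := by omega
              obtain rfl : n13 = 0 := by omega
              obtain rfl : n12 = 0 := by omega
              rcases (show n11 = 0 ∨ n11 = 1 by omega) with rfl | rfl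
              · obtain rfl : n10 = 1 := by omega
                obtain rfl : n03 = 0 := by omega
                obtain rfl : n02 = 0 := by omega
                obtain rfl : n01 = 1 := by omega
                exact Or.inr (Or.inr (Or.inr (Or.inr (Or.inr (Or.inr (Or.inr (Or.inr (Or.inr (Or.inr (Or.inr (Or.inr (Or.inr (Or.inr (Or.inr (Or.inr (Or.inr (Or.inr (Or.inl ⟨rfl, rfl, rfl, rfl, rfl, rfl, rfl, rfl, rfl, rfl, rfl, rfl, rfl, rfl, rfl⟩))))))))))))))))))
              · obtain rfl : n10 = 0 := by omega
                obtain rfl : n03 = 0 := by omega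
                obtain rfl : n02 = 0 := by omega
                obtain rfl : n01 = 0 := by omega
                exact Or.inr (Or.inr (Or.inr (Or.inl ⟨rfl, rfl, rfl, rfl, rfl, rfl, rfl, rfl, rfl, rfl, rfl, rfl, rfl, rfl, rfl⟩)))
          · obtain rfl : n22 = 0 := by omega
            obtain rfl : n21 = 0 := by omega
            obtain rfl : n20 = 0 := by omega
            obtain rfl : n13 = 0 := by omega
            obtain rfl : n12 = 0 := by omega
            obtain rfl : n11 = 0 := by omega
            obtain rfl : n10 = 1 := by omega
            obtain rfl : n03 = 0 := by omega
            obtain rfl : n02 = 0 := by omega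
            obtain rfl : n01 = 0 := by omega
            exact Or.inr (Or.inr (Or.inr (Or.inr (Or.inr (Or.inl ⟨rfl, rfl, rfl, rfl, rfl, rfl, rfl, rfl, rfl, rfl, rfl, rfl, rfl, rfl, rfl⟩)))))
        · obtain rfl : n23 = 0 := by omega
          obtain rfl : n22 = 0 := by omega
          obtain rfl : n21 = 0 := by omega
          obtain rfl : n20 = 0 := by omega
          obtain rfl : n13 = 0 := by omega
          obtain rfl : n12 = 0 := by omega
          obtain rfl : n11 = 0 := by omega
          obtain rfl : n10 = 0 := by omega
          rcases (show n03 = 0 ∨ n03 = 1 by omega) with rfl | rfl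
          · rcases (show n02 = 0 ∨ n02 = 1 by omega) with rfl | rfl
            · obtain rfl : n01 = 3 := by omega
              exact Or.inr (Or.inr (Or.inr (Or.inr (Or.inr (Or.inr (Or.inr (Or.inr (Or.inr (Or.inr (Or.inr (Or.inr (Or.inr (Or.inr (Or.inr (Or.inr (Or.inr (Or.inr (Or.inr (Or.inr (Or.inr (Or.inr (Or.inr (Or.inr (Or.inr (Or.inr (Or.inr (Or.inr (Or.inl ⟨rfl, rfl, rfl, rfl, rfl, rfl, rfl, rfl, rfl, rfl, rfl, rfl, rfl, rfl, rfl⟩))))))))))))))))))))))))))))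
            · obtain rfl : n01 = 1 := by omega
              exact Or.inr (Or.inr (Or.inr (Or.inr (Or.inr (Or.inr (Or.inr (Or.inr (Or.inr (Or.inr (Or.inr (Or.inr (Or.inr (Or.inr (Or.inr (Or.inr (Or.inr (Or.inr (Or.inr (Or.inr (Or.inr (Or.inl ⟨rfl, rfl, rfl, rfl, rfl, rfl, rfl, rfl, rfl, rfl, rfl, rfl, rfl, rfl, rfl⟩)))))))))))))))))))))
          · obtain rfl : n02 = 0 := by omega
            obtain rfl : n01 = 0 := by omega
            exact Or.inr (Or.inr (Or.inr (Or.inr (Or.inr (Or.inr (Or.inr (Or.inr (Or.inl ⟨rfl, rfl, rfl, rfl, rfl, rfl, rfl, rfl, rfl, rfl, rfl, rfl, rfl, rfl, rfl⟩))))))))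
      · obtain rfl : n30 = 0 := by omega
        obtain rfl : n23 = 0 := by omega
        obtain rfl : n22 = 0 := by omega
        obtain rfl : n21 = 0 := by omega
        obtain rfl : n20 = 0 := by omega
        obtain rfl : n13 = 0 := by omega
        obtain rfl : n12 = 0 := by omega
        obtain rfl : n11 = 0 := by omega
        obtain rfl : n10 = 0 := by omega
        obtain rfl : n03 = 0 := by omega
        rcases (show n02 = 0 ∨ n02 = 1 by omega) with rfl | rfl
        · obtain rfl : n01 = 2 := by omega
          exact Or.inr (Or.inr (Or.inr (Or.inr (Or.inr (Or.inr (Or.inr (Or.inr (Or.inr (Or.inr (Or.inr (Or.inr (Or.inr (Or.inr (Or.inr (Or.inr (Or.inr (Or.inr (Or.inr (Or.inr (Or.inr (Or.inr (Or.inr (Or.inr (Or.inl ⟨rfl, rfl, rfl, rfl, rfl, rfl, rfl, rfl, rfl, rfl, rfl, rfl, rfl, rfl, rfl⟩))))))))))))))))))))))))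
        · obtain rfl : n01 = 0 := by omega
          exact Or.inr (Or.inr (Or.inr (Or.inr (Or.inr (Or.inr (Or.inr (Or.inr (Or.inr (Or.inr (Or.inr (Or.inl ⟨rfl, rfl, rfl, rfl, rfl, rfl, rfl, rfl, rfl, rfl, rfl, rfl, rfl, rfl, rfl⟩)))))))))))
    · obtain rfl : n31 = 0 := by omega
      obtain rfl : n30 = 0 := by omega
      obtain rfl : n23 = 0 := by omega
      obtain rfl : n22 = 0 := by omega
      obtain rfl : n21 = 0 := by omega
      obtain rfl : n20 = 0 := by omega
      obtain rfl : n13 = 0 := by omega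
      obtain rfl : n12 = 0 := by omega
      obtain rfl : n11 = 0 := by omega
      obtain rfl : n10 = 0 := by omega
      obtain rfl : n03 = 0 := by omega
      obtain rfl : n02 = 0 := by omega
      obtain rfl : n01 = 1 := by omega
      exact Or.inr (Or.inr (Or.inr (Or.inr (Or.inr (Or.inr (Or.inr (Or.inr (Or.inr (Or.inr (Or.inr (Or.inr (Or.inr (Or.inr (Or.inr (Or.inl ⟨rfl, rfl, rfl, rfl, rfl, rfl, rfl, rfl, rfl, rfl, rfl, rfl, rfl, rfl, rfl⟩)))))))))))))))
  · obtain rfl : n32 = 0 := by omega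
    obtain rfl : n31 = 0 := by omega
    obtain rfl : n30 = 0 := by omega
    obtain rfl : n23 = 0 := by omega
    obtain rfl : n22 = 0 := by omega
    obtain rfl : n21 = 0 := by omega
    obtain rfl : n20 = 0 := by omega
    obtain rfl : n13 = 0 := by omega
    obtain rfl : n12 = 0 := by omega
    obtain rfl : n11 = 0 := by omega
    obtain rfl : n10 = 0 := by omega
    obtain rfl : n03 = 0 := by omega
    obtain rfl : n02 = 0 := by omega
    obtain rfl : n01 = 0 := by omega
    exact Or.inl ⟨rfl, rfl, rfl, rfl, rfl, rfl, rfl, rfl, rfl, rfl, rfl, rfl, rfl, rfl, rfl⟩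
lemma cnt_eq_zero {x : (Fin I → ℕ) × (Fin I → ℕ)} (h1 : ∑ i, x.1 i = 3) (h2 : ∑ i, x.2 i = 3)
    {p : ℕ × ℕ} (hp : 4 ≤ p.1 ∨ 4 ≤ p.2) : cnt x p = 0 := by
  rw [cnt_filter, Finset.card_eq_zero, Finset.filter_eq_empty_iff]
  intro i _
  intro hip
  have ha : x.1 i ≤ 3 := entry_le h1 i
  have hb : x.2 i ≤ 3 := entry_le (x := (x.2, x.1)) h2 i
  rcases hp with hp | hp
  · have : x.1 i = p.1 := by rw [← hip]
    omega
  · have : x.2 i = p.2 := by rw [← hip]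
    omega

set_option maxHeartbeats 1000000 in
lemma cnt_eq_of_eList_eq {x y : (Fin I → ℕ) × (Fin I → ℕ)}
    (hx1 : ∑ i, x.1 i = 3) (hx2 : ∑ i, x.2 i = 3)
    (hy1 : ∑ i, y.1 i = 3) (hy2 : ∑ i, y.2 i = 3)
    (h : eList x = eList y) : ∀ p, cnt x p = cnt y p := by
  simp only [eList, Tlist, List.map, List.cons.injEq, and_true] at h
  norm_num [rcnt] at h
  have hGx := sum_cnt hx1 hx2
  have hGy := sum_cnt hy1 hy2
  rw [TF_expand] at hGx hGy
  norm_num at hGx hGy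
  have h00' : cnt x ((0 : ℕ), (0 : ℕ)) = cnt y ((0 : ℕ), (0 : ℕ)) := by omega
  have h00 : cnt x (0 : ℕ × ℕ) = cnt y (0 : ℕ × ℕ) := h00'
  rintro ⟨a, b⟩
  by_cases ha : a ≤ 3
  · by_cases hb : b ≤ 3
    · interval_cases a <;> interval_cases b <;> norm_num <;> omega
    · rw [cnt_eq_zero hx1 hx2 (p := (a,b)) (by right; simpa using by omega),
        cnt_eq_zero hy1 hy2 (p := (a,b)) (by right; simpa using by omega)]
  · rw [cnt_eq_zero hx1 hx2 (p := (a,b)) (by left; simpa using by omega),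
      cnt_eq_zero hy1 hy2 (p := (a,b)) (by left; simpa using by omega)]

lemma eList_eq_of_cnt_eq {x y : (Fin I → ℕ) × (Fin I → ℕ)}
    (h : ∀ p, cnt y p = cnt x p) : eList y = eList x := by
  unfold eList
  have : rcnt y = rcnt x := funext fun p => by unfold rcnt; rw [h p]
  rw [this]

lemma pInv_eq_of_cntRel {x y : (Fin I → ℕ) × (Fin I → ℕ)} (h : CntRel x y) :
    PInv y = PInv x := by
  rcases h with h | h
  · rw [PInv, PInv, eList_eq_of_cnt_eq h]
  · have he : eList y = sw (eList x) := by
      rw [eList_eq_of_cnt_eq h, ← sw_eList]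
    rw [PInv, PInv, he, sw_sw_eList]
    exact Sym2.eq_swap

lemma cntRel_of_pInv_eq {x y : (Fin I → ℕ) × (Fin I → ℕ)}
    (hx1 : ∑ i, x.1 i = 3) (hx2 : ∑ i, x.2 i = 3)
    (hy1 : ∑ i, y.1 i = 3) (hy2 : ∑ i, y.2 i = 3)
    (h : PInv y = PInv x) : CntRel x y := by
  rw [PInv, PInv, Sym2.eq_iff] at h
  rcases h with ⟨h1, _⟩ | ⟨h1, _⟩
  · exact Or.inl (cnt_eq_of_eList_eq hy1 hy2 hx1 hx2 h1)
  · right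
    have : eList y = eList (x.2, x.1) := by rw [h1, sw_eList]
    exact cnt_eq_of_eList_eq hy1 hy2 hx2 hx1 this

/-! ### Representatives -/

def pl (l : List ℕ) : List (ℕ × ℕ) := (List.zipWith (fun p n => List.replicate n p) Tlist l).flatten

def rep (I : ℕ) (l : List ℕ) : (Fin I → ℕ) × (Fin I → ℕ) :=
  (fun i => ((pl l).getD i (0,0)).1, fun i => ((pl l).getD i (0,0)).2)

lemma sum_range_getD {α : Type*} (f : α → ℕ) (d : α) (hf : f d = 0) (L : List α) :
    ∑ i ∈ range L.length, f (L.getD i d) = (L.map f).sum := by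
  induction L with
  | nil => simp
  | cons a L ih =>
    rw [List.length_cons, Finset.sum_range_succ']
    simp only [List.getD_cons_succ, List.getD_cons_zero, List.map_cons, List.sum_cons]
    rw [ih, add_comm]

lemma sum_getD {α : Type*} (f : α → ℕ) (d : α) (hf : f d = 0) (L : List α)
    (hL : L.length ≤ I) : ∑ i : Fin I, f (L.getD i d) = (L.map f).sum := by
  rw [Fin.sum_univ_eq_sum_range (fun i => f (L.getD i d))]
  rw [← Finset.sum_subset (Finset.range_subset_range.2 hL) (fun i _ hi => by
    rw [List.getD_eq_default _ _ (Nat.le_of_not_lt (fun h => hi (Finset.mem_range.2 h)))]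
    exact hf)]
  exact sum_range_getD f d hf L

def c6 (l : List ℕ) (p : ℕ × ℕ) : ℕ := ∑ i ∈ range 6, if (pl l).getD i (0,0) = p then 1 else 0

lemma cnt_rep {l : List ℕ} (hl6 : (pl l).length ≤ 6) (hI : 6 ≤ I) {p : ℕ × ℕ}
    (hp : p ≠ (0,0)) : cnt (rep I l) p = c6 l p := by
  rw [cnt_filter, Finset.card_filter]
  have : ∀ i : Fin I, ((rep I l).1 i, (rep I l).2 i) = (pl l).getD i (0,0) := fun i => rfl
  simp only [this]
  rw [Fin.sum_univ_eq_sum_range (fun i => if (pl l).getD i (0,0) = p then 1 else 0)]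
  rw [← Finset.sum_subset (Finset.range_subset_range.2 hI) (fun i _ hi => by
    rw [List.getD_eq_default _ _ (le_trans hl6 (Nat.le_of_not_lt (fun h => hi (Finset.mem_range.2 h))))]
    exact if_neg (fun h => hp h.symm))]
  rfl

lemma L31_facts : ∀ l ∈ L31, ((pl l).map Prod.fst).sum = 3 ∧ ((pl l).map Prod.snd).sum = 3 ∧
    (pl l).length ≤ 6 ∧ Tlist.map (c6 l) = l := by decide

lemma rep_sum1 {l : List ℕ} (hl : l ∈ L31) (hI : 6 ≤ I) : ∑ i, (rep I l).1 i = 3 := by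
  have h := (L31_facts l hl).1
  rw [← h]
  exact sum_getD Prod.fst (0,0) rfl (pl l) (le_trans (L31_facts l hl).2.2.1 hI)

lemma rep_sum2 {l : List ℕ} (hl : l ∈ L31) (hI : 6 ≤ I) : ∑ i, (rep I l).2 i = 3 := by
  have h := (L31_facts l hl).2.1
  rw [← h]
  exact sum_getD Prod.snd (0,0) rfl (pl l) (le_trans (L31_facts l hl).2.2.1 hI)

lemma Tlist_ne : ∀ p ∈ Tlist, p ≠ ((0 : ℕ), (0 : ℕ)) := by decide

lemma eList_rep {l : List ℕ} (hl : l ∈ L31) (hI : 6 ≤ I) : eList (rep I l) = l := by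
  have : eList (rep I l) = Tlist.map (c6 l) := by
    apply List.map_congr_left
    intro p hp
    rw [rcnt, if_neg (Tlist_ne p hp), cnt_rep (L31_facts l hl).2.2.1 hI (Tlist_ne p hp)]
  rw [this, (L31_facts l hl).2.2.2]

def S21 : Finset (Sym2 (List ℕ)) := (L31.map (fun l => s(l, sw l))).toFinset

lemma S21_card : S21.card = 21 := by decide

lemma pInv_mem_S21 {x : (Fin I → ℕ) × (Fin I → ℕ)} (h1 : ∑ i, x.1 i = 3)
    (h2 : ∑ i, x.2 i = 3) : PInv x ∈ S21 := by
  rw [S21, List.mem_toFinset, List.mem_map]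
  exact ⟨eList x, classify h1 h2, rfl⟩

lemma self_mem_pairOrbit (x : (Fin I → ℕ) × (Fin I → ℕ)) : x ∈ pairOrbit I x :=
  ⟨1, Or.inl rfl⟩

lemma pInv_eq_of_orbit_eq {x y : (Fin I → ℕ) × (Fin I → ℕ)}
    (h : pairOrbit I x = pairOrbit I y) : PInv x = PInv y := by
  have hy : y ∈ pairOrbit I x := h ▸ self_mem_pairOrbit y
  exact (pInv_eq_of_cntRel (mem_pairOrbit_iff.1 hy)).symm


/-- For `K = 3` and `I ≥ 6`, there are exactly 21 identity states. -/
theorem card_identityStates_three (I : ℕ) (hI : 6 ≤ I) :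
    Nat.card (IdentityStates 3 I) = 21 := by
  have hbij : Function.Bijective (fun S : IdentityStates 3 I =>
      (⟨PInv S.2.choose, pInv_mem_S21 S.2.choose_spec.1 S.2.choose_spec.2.1⟩ :
        {s // s ∈ S21})) := by
    constructor
    · intro S S' h
      simp only [Subtype.mk.injEq] at h
      obtain ⟨hx1, hx2, hxO⟩ := S.2.choose_spec
      obtain ⟨hy1, hy2, hyO⟩ := S'.2.choose_spec
      have hrel := cntRel_of_pInv_eq hy1 hy2 hx1 hx2 h
      have := pairOrbit_eq_of_cntRel hrel
      exact Subtype.ext (by rw [hxO, hyO, ← this])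
    · rintro ⟨s, hs⟩
      rw [S21, List.mem_toFinset, List.mem_map] at hs
      obtain ⟨l, hl, rfl⟩ := hs
      have h1 := rep_sum1 hl hI
      have h2 := rep_sum2 hl hI
      refine ⟨⟨pairOrbit I (rep I l), rep I l, h1, h2, rfl⟩, ?_⟩
      apply Subtype.ext
      simp only
      set S : IdentityStates 3 I := ⟨pairOrbit I (rep I l), rep I l, h1, h2, rfl⟩ with hS
      have horb : pairOrbit I S.2.choose = pairOrbit I (rep I l) := by
        have := S.2.choose_spec.2.2
        exact this.symm
      rw [pInv_eq_of_orbit_eq horb, PInv, eList_rep hl hI]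
  rw [Nat.card_eq_of_bijective _ hbij, Nat.card_eq_finsetCard, S21_card]
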